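/- For α = 1/2, define the functional F(μ, Σ) = ((1−α)/α)·( log det Σ + tr(Σ⁻¹ Γ_*) + (μ − μ_*)ᵀ Σ⁻¹ (μ − μ_*) ) + tr(Γ_E⁻¹ B Σ Bᵀ) + (y − Bμ − μ_E)ᵀ Γ_E⁻¹ (y − Bμ − μ_E) + tr(Γ_pr⁻¹ Σ) + (μ − μ_pr)ᵀ Γ_pr⁻¹ (μ − μ_pr) + log(det Γ_pr / det Σ), for μ ∈ ℝⁿ and Σ ∈ ℝⁿˣⁿ symmetric positive definite. Then F attains its minimum over this domain exactly at the point (μ, Σ) = (μ_*, Γ_*); i.e., F(μ, Σ) ≥ F(μ_*, Γ_*) for all admissible (μ, Σ), with equality if and only if μ = μ_* and Σ = Γ_*. -/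

import Mathlib

open Matrix



variable {n m : ℕ}

lemma transpose_eq_of_hermitian {A : Matrix (Fin n) (Fin n) ℝ} (h : A.IsHermitian) : Aᵀ = A := by
  rw [Matrix.IsHermitian, conjTranspose_eq_transpose_of_trivial] at h; exact h

lemma symm_dot {A : Matrix (Fin n) (Fin n) ℝ} (hA : Aᵀ = A) (u v : Fin n → ℝ) :
    v ⬝ᵥ (A *ᵥ u) = u ⬝ᵥ (A *ᵥ v) := by
  rw [dotProduct_mulVec]
  nth_rewrite 1 [← hA]
  rw [vecMul_transpose, dotProduct_comm]

lemma dot_transpose (B : Matrix (Fin m) (Fin n) ℝ) (u : Fin n → ℝ) (w : Fin m → ℝ) :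
    u ⬝ᵥ (Bᵀ *ᵥ w) = (B *ᵥ u) ⬝ᵥ w := by
  rw [dotProduct_mulVec, vecMul_transpose, dotProduct_comm]

-- quadratic form nonneg for posdef, and zero iff zero
lemma quad_nonneg {A : Matrix (Fin n) (Fin n) ℝ} (hA : A.PosDef) (x : Fin n → ℝ) :
    0 ≤ x ⬝ᵥ (A *ᵥ x) := by
  rcases eq_or_ne x 0 with h | h
  · simp [h]
  · have := hA.dotProduct_mulVec_pos h
    simpa using this.le

lemma quad_eq_zero_iff {A : Matrix (Fin n) (Fin n) ℝ} (hA : A.PosDef) (x : Fin n → ℝ) :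
    x ⬝ᵥ (A *ᵥ x) = 0 ↔ x = 0 := by
  constructor
  · intro h
    by_contra hx
    have := hA.dotProduct_mulVec_pos hx
    simp [h] at this
  · rintro rfl; simp



variable {n : ℕ}

lemma trace_diag_form {C A : Matrix (Fin n) (Fin n) ℝ} (hC : Cᵀ = C) :
    (C * A * C).trace = ∑ i, (fun j => C i j) ⬝ᵥ (A *ᵥ (fun j => C i j)) := by
  have hsym : ∀ a b, C a b = C b a := fun a b => by
    conv_rhs => rw [← hC, transpose_apply]
  rw [Matrix.trace]
  congr 1
  ext i
  simp only [Matrix.diag_apply, Matrix.mul_apply, dotProduct, Matrix.mulVec, dotProduct,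
    Finset.sum_mul, Finset.mul_sum]
  rw [Finset.sum_comm]
  refine Finset.sum_congr rfl fun j _ => Finset.sum_congr rfl fun k _ => ?_
  rw [hsym k i]; ring

lemma trace_mul_psd_nonneg {A M : Matrix (Fin n) (Fin n) ℝ} (hA : A.PosSemidef)
    (hM : M.PosSemidef) : 0 ≤ (A * M).trace := by
  obtain ⟨C, hCpsd, hCC⟩ : ∃ C : Matrix (Fin n) (Fin n) ℝ, C.PosSemidef ∧ C * C = M :=
    by open scoped MatrixOrder in exact ⟨CFC.sqrt M, (CFC.sqrt_nonneg M).posSemidef, CFC.sqrt_mul_sqrt_self M hM.nonneg⟩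
  have hCt : Cᵀ = C := transpose_eq_of_hermitian hCpsd.isHermitian
  have : (A * M).trace = (C * A * C).trace := by
    rw [← hCC, ← Matrix.mul_assoc, trace_mul_cycle]
  rw [this, trace_diag_form hCt]
  refine Finset.sum_nonneg fun i _ => ?_
  simpa using hA.dotProduct_mulVec_nonneg (fun j => C i j)

lemma eq_zero_of_trace_mul_psd {A M : Matrix (Fin n) (Fin n) ℝ} (hA : A.PosDef)
    (hM : M.PosSemidef) (h : (A * M).trace = 0) : M = 0 := by
  obtain ⟨C, hCpsd, hCC⟩ : ∃ C : Matrix (Fin n) (Fin n) ℝ, C.PosSemidef ∧ C * C = M :=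
    by open scoped MatrixOrder in exact ⟨CFC.sqrt M, (CFC.sqrt_nonneg M).posSemidef, CFC.sqrt_mul_sqrt_self M hM.nonneg⟩
  have hCt : Cᵀ = C := transpose_eq_of_hermitian hCpsd.isHermitian
  have htr : (A * M).trace = ∑ i, (fun j => C i j) ⬝ᵥ (A *ᵥ (fun j => C i j)) := by
    rw [← hCC, ← Matrix.mul_assoc, trace_mul_cycle, trace_diag_form hCt]
  rw [htr] at h
  have hnn : ∀ i ∈ Finset.univ, (0:ℝ) ≤ (fun j => C i j) ⬝ᵥ (A *ᵥ (fun j => C i j)) := by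
    intro i _
    rcases eq_or_ne (fun j => C i j) 0 with hz | hz
    · simp [hz]
    · simpa using (hA.dotProduct_mulVec_pos hz).le
  have hzero := (Finset.sum_eq_zero_iff_of_nonneg hnn).mp h
  have hCzero : C = 0 := by
    ext i j
    have hi := hzero i (Finset.mem_univ i)
    by_cases hz : (fun j => C i j) = 0
    · exact congrFun hz j
    · exact absurd hi (ne_of_gt (by simpa using hA.dotProduct_mulVec_pos hz))
  rw [← hCC, hCzero, Matrix.mul_zero]
section KEY
variable {n : ℕ}

lemma key_expand {P S : Matrix (Fin n) (Fin n) ℝ} (hP : P.PosDef) (hS : S.PosDef) :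
    S⁻¹ * ((P - S) * (P⁻¹ * (P - S))) = S⁻¹ * P + P⁻¹ * S - 1 - 1 := by
  have hSd : IsUnit S.det := hS.det_pos.ne'.isUnit
  have hPd : IsUnit P.det := hP.det_pos.ne'.isUnit
  have hS1 : S⁻¹ * S = 1 := nonsing_inv_mul S hSd
  have hP1 : P * P⁻¹ = 1 := mul_nonsing_inv P hPd
  have hP2 : P⁻¹ * P = 1 := nonsing_inv_mul P hPd
  have hmix : (S⁻¹ * P) * (P⁻¹ * S) = 1 := by
    rw [Matrix.mul_assoc, ← Matrix.mul_assoc P, hP1, Matrix.one_mul, hS1]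
  have step : S⁻¹ * ((P - S) * (P⁻¹ * (P - S)))
      = (S⁻¹ * P) * (P⁻¹ * P) - (S⁻¹ * P) * (P⁻¹ * S)
        - (S⁻¹ * S) * (P⁻¹ * P) + (S⁻¹ * S) * (P⁻¹ * S) := by
    noncomm_ring
  rw [step, hP2, hS1, hmix]
  simp only [Matrix.mul_one, Matrix.one_mul]
  abel

lemma key_psd {P S : Matrix (Fin n) (Fin n) ℝ} (hP : P.PosDef) (hS : S.PosDef) :
    ((P - S) * (P⁻¹ * (P - S))).PosSemidef := by
  have hDt : (P - S)ᵀ = P - S := by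
    rw [transpose_sub, transpose_eq_of_hermitian hP.isHermitian,
      transpose_eq_of_hermitian hS.isHermitian]
  have hDh : (P - S)ᴴ = P - S := by
    rw [conjTranspose_eq_transpose_of_trivial, hDt]
  have := (hP.inv.posSemidef).conjTranspose_mul_mul_same (P - S)
  rwa [hDh, Matrix.mul_assoc] at this

lemma key_le {P S : Matrix (Fin n) (Fin n) ℝ} (hP : P.PosDef) (hS : S.PosDef) :
    (n : ℝ) + n ≤ (S⁻¹ * P).trace + (P⁻¹ * S).trace := by
  have h0 : 0 ≤ (S⁻¹ * ((P - S) * (P⁻¹ * (P - S)))).trace :=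
    trace_mul_psd_nonneg hS.inv.posSemidef (key_psd hP hS)
  have htr : (S⁻¹ * ((P - S) * (P⁻¹ * (P - S)))).trace
      = (S⁻¹ * P).trace + (P⁻¹ * S).trace - n - n := by
    rw [key_expand hP hS]
    simp [Matrix.trace_sub, Matrix.trace_add, Matrix.trace_one]
  linarith [htr ▸ h0]

lemma key_eq_iff {P S : Matrix (Fin n) (Fin n) ℝ} (hP : P.PosDef) (hS : S.PosDef) :
    (S⁻¹ * P).trace + (P⁻¹ * S).trace = (n : ℝ) + n ↔ S = P := by
  constructor
  · intro h
    have htr : (S⁻¹ * ((P - S) * (P⁻¹ * (P - S)))).trace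
        = (S⁻¹ * P).trace + (P⁻¹ * S).trace - n - n := by
      rw [key_expand hP hS]
      simp [Matrix.trace_sub, Matrix.trace_add, Matrix.trace_one]
    have hz : (S⁻¹ * ((P - S) * (P⁻¹ * (P - S)))).trace = 0 := by rw [htr, h]; ring
    have hM0 : (P - S) * (P⁻¹ * (P - S)) = 0 :=
      eq_zero_of_trace_mul_psd hS.inv (key_psd hP hS) hz
    have hDt : (P - S)ᵀ = P - S := by
      rw [transpose_sub, transpose_eq_of_hermitian hP.isHermitian,
        transpose_eq_of_hermitian hS.isHermitian]
    have hDx : ∀ x : Fin n → ℝ, (P - S) *ᵥ x = 0 := by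
      intro x
      have hq : x ⬝ᵥ (((P - S) * (P⁻¹ * (P - S))) *ᵥ x) = 0 := by rw [hM0]; simp
      have hq2 : ((P - S) *ᵥ x) ⬝ᵥ (P⁻¹ *ᵥ ((P - S) *ᵥ x)) = 0 := by
        rw [← dot_transpose (P - S) x (P⁻¹ *ᵥ ((P - S) *ᵥ x)), hDt,
          Matrix.mulVec_mulVec, Matrix.mulVec_mulVec]
        simpa [Matrix.mul_assoc] using hq
      exact (quad_eq_zero_iff hP.inv _).mp hq2
    have hD0 : P - S = 0 := by
      ext i j
      have := congrFun (hDx (Pi.single j 1)) i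
      simpa [Matrix.mulVec_single] using this
    have := sub_eq_zero.mp hD0
    exact this.symm
  · rintro rfl
    have hSd : IsUnit S.det := hS.det_pos.ne'.isUnit
    rw [nonsing_inv_mul S hSd]
    simp [Matrix.trace_one]
end KEY
lemma quad_decomp {n m : ℕ} (B : Matrix (Fin m) (Fin n) ℝ) (E : Matrix (Fin m) (Fin m) ℝ)
    (Pm : Matrix (Fin n) (Fin n) ℝ) (hE : Eᵀ = E) (hPm : Pmᵀ = Pm)
    (r : Fin m → ℝ) (μpr ν μ : Fin n → ℝ)
    (hν : (Bᵀ * E * B + Pm) *ᵥ ν = Bᵀ *ᵥ (E *ᵥ r) + Pm *ᵥ μpr) :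
    (r - B *ᵥ μ) ⬝ᵥ (E *ᵥ (r - B *ᵥ μ)) + (μ - μpr) ⬝ᵥ (Pm *ᵥ (μ - μpr))
      = (μ - ν) ⬝ᵥ ((Bᵀ * E * B + Pm) *ᵥ (μ - ν))
        + ((r - B *ᵥ ν) ⬝ᵥ (E *ᵥ (r - B *ᵥ ν)) + (ν - μpr) ⬝ᵥ (Pm *ᵥ (ν - μpr))) := by
  have hmv : ∀ x : Fin n → ℝ, (Bᵀ * E * B + Pm) *ᵥ x = Bᵀ *ᵥ (E *ᵥ (B *ᵥ x)) + Pm *ᵥ x := by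
    intro x; rw [Matrix.add_mulVec, ← Matrix.mulVec_mulVec, ← Matrix.mulVec_mulVec]
  have h1 : (B *ᵥ μ) ⬝ᵥ (E *ᵥ (B *ᵥ ν)) + μ ⬝ᵥ (Pm *ᵥ ν)
      = (B *ᵥ μ) ⬝ᵥ (E *ᵥ r) + μ ⬝ᵥ (Pm *ᵥ μpr) := by
    have := congrArg (fun w => μ ⬝ᵥ w) hν
    simp only [hmv, dotProduct_add, dot_transpose] at this
    exact this
  have h2 : (B *ᵥ ν) ⬝ᵥ (E *ᵥ (B *ᵥ ν)) + ν ⬝ᵥ (Pm *ᵥ ν)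
      = (B *ᵥ ν) ⬝ᵥ (E *ᵥ r) + ν ⬝ᵥ (Pm *ᵥ μpr) := by
    have := congrArg (fun w => ν ⬝ᵥ w) hν
    simp only [hmv, dotProduct_add, dot_transpose] at this
    exact this
  have s1 := symm_dot hE r (B *ᵥ μ)
  have s2 := symm_dot hE r (B *ᵥ ν)
  have s3 := symm_dot hE (B *ᵥ μ) (B *ᵥ ν)
  have s4 := symm_dot hPm μ ν
  have s5 := symm_dot hPm μ μpr
  have s6 := symm_dot hPm ν μpr
  simp only [hmv, Matrix.mulVec_sub, dotProduct_sub, sub_dotProduct, dotProduct_add,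
    add_dotProduct, dot_transpose]
  linarith [h1, h2, s1, s2, s3, s4, s5, s6]
/-- Theorem 2 of the UQ-VAE paper (linear-Gaussian analytical result, `α = 1/2`):
the loss functional `F(μ, Σ)` attains its minimum over pairs of a mean `μ ∈ ℝⁿ` and a
symmetric positive definite covariance `Σ` exactly at the true posterior `(μ_*, Γ_*)`. -/
theorem UQVAE_loss_minimized_at_true_posterior (n m : ℕ) (hn : 0 < n) (hm : 0 < m)
    (B : Matrix (Fin m) (Fin n) ℝ) (y μE : Fin m → ℝ) (μpr : Fin n → ℝ)
    (ΓE : Matrix (Fin m) (Fin m) ℝ) (Γpr : Matrix (Fin n) (Fin n) ℝ)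
    (hΓE : ΓE.PosDef) (hΓpr : Γpr.PosDef) (α : ℝ) (hα : α = 1 / 2) :
    let Γstar : Matrix (Fin n) (Fin n) ℝ := (Bᵀ * ΓE⁻¹ * B + Γpr⁻¹)⁻¹
    let μstar : Fin n → ℝ := Γstar *ᵥ (Bᵀ *ᵥ (ΓE⁻¹ *ᵥ (y - μE)) + Γpr⁻¹ *ᵥ μpr)
    let F : (Fin n → ℝ) → Matrix (Fin n) (Fin n) ℝ → ℝ := fun μ S =>
      ((1 - α) / α) * (Real.log S.det + (S⁻¹ * Γstar).trace
          + (μ - μstar) ⬝ᵥ (S⁻¹ *ᵥ (μ - μstar)))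
        + (ΓE⁻¹ * B * S * Bᵀ).trace
        + (y - B *ᵥ μ - μE) ⬝ᵥ (ΓE⁻¹ *ᵥ (y - B *ᵥ μ - μE))
        + (Γpr⁻¹ * S).trace + (μ - μpr) ⬝ᵥ (Γpr⁻¹ *ᵥ (μ - μpr))
        + Real.log (Γpr.det / S.det)
    (∀ (μ : Fin n → ℝ) (S : Matrix (Fin n) (Fin n) ℝ), S.PosDef →
        F μstar Γstar ≤ F μ S)
      ∧ (∀ (μ : Fin n → ℝ) (S : Matrix (Fin n) (Fin n) ℝ), S.PosDef →
          (F μ S = F μstar Γstar ↔ μ = μstar ∧ S = Γstar)) := by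
  intro Γstar μstar F
  subst hα
  have hα1 : (1 - (1:ℝ)/2) / (1/2) = 1 := by norm_num
  -- basic positivity facts
  have hE : (ΓE⁻¹).PosDef := hΓE.inv
  have hPm : (Γpr⁻¹).PosDef := hΓpr.inv
  have hEt : (ΓE⁻¹)ᵀ = ΓE⁻¹ := transpose_eq_of_hermitian hE.isHermitian
  have hPt : (Γpr⁻¹)ᵀ = Γpr⁻¹ := transpose_eq_of_hermitian hPm.isHermitian
  have hBEB : (Bᵀ * ΓE⁻¹ * B).PosSemidef := by
    have := hE.posSemidef.conjTranspose_mul_mul_same B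
    rwa [conjTranspose_eq_transpose_of_trivial] at this
  have hH : (Bᵀ * ΓE⁻¹ * B + Γpr⁻¹).PosDef := Matrix.PosDef.posSemidef_add hBEB hPm
  have hHd : IsUnit (Bᵀ * ΓE⁻¹ * B + Γpr⁻¹).det := hH.det_pos.ne'.isUnit
  have hΓs : Γstar.PosDef := hH.inv
  have hΓsinv : Γstar⁻¹ = Bᵀ * ΓE⁻¹ * B + Γpr⁻¹ := nonsing_inv_nonsing_inv _ hHd
  have hμstar : (Bᵀ * ΓE⁻¹ * B + Γpr⁻¹) *ᵥ μstar
      = Bᵀ *ᵥ (ΓE⁻¹ *ᵥ (y - μE)) + Γpr⁻¹ *ᵥ μpr := by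
    show (Bᵀ * ΓE⁻¹ * B + Γpr⁻¹) *ᵥ ((Bᵀ * ΓE⁻¹ * B + Γpr⁻¹)⁻¹ *ᵥ _) = _
    rw [Matrix.mulVec_mulVec, Matrix.mul_nonsing_inv _ hHd, Matrix.one_mulVec]
  -- the constant part
  set gν : ℝ := ((y - μE) - B *ᵥ μstar) ⬝ᵥ (ΓE⁻¹ *ᵥ ((y - μE) - B *ᵥ μstar))
      + (μstar - μpr) ⬝ᵥ (Γpr⁻¹ *ᵥ (μstar - μpr)) with hgν
  -- value formula
  have hFval : ∀ (μ : Fin n → ℝ) (S : Matrix (Fin n) (Fin n) ℝ), S.PosDef →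
      F μ S = ((S⁻¹ * Γstar).trace + ((Bᵀ * ΓE⁻¹ * B + Γpr⁻¹) * S).trace)
        + (μ - μstar) ⬝ᵥ (S⁻¹ *ᵥ (μ - μstar))
        + (μ - μstar) ⬝ᵥ ((Bᵀ * ΓE⁻¹ * B + Γpr⁻¹) *ᵥ (μ - μstar))
        + (gν + Real.log Γpr.det) := by
    intro μ S hS
    simp only [F]
    rw [hα1, one_mul]
    rw [Real.log_div hΓpr.det_pos.ne' hS.det_pos.ne']
    have htrc : (ΓE⁻¹ * B * S * Bᵀ).trace + (Γpr⁻¹ * S).trace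
        = ((Bᵀ * ΓE⁻¹ * B + Γpr⁻¹) * S).trace := by
      have hassoc : Bᵀ * (ΓE⁻¹ * B) * S = Bᵀ * ΓE⁻¹ * B * S := by
        rw [Matrix.mul_assoc Bᵀ ΓE⁻¹ B]
      rw [trace_mul_cycle (ΓE⁻¹ * B) S Bᵀ, hassoc, Matrix.add_mul, Matrix.trace_add]
    have hsub : y - B *ᵥ μ - μE = (y - μE) - B *ᵥ μ := sub_right_comm y (B *ᵥ μ) μE
    have hsubs : y - B *ᵥ μstar - μE = (y - μE) - B *ᵥ μstar := sub_right_comm y (B *ᵥ μstar) μE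
    rw [hsub]
    have hquad := quad_decomp B (ΓE⁻¹) (Γpr⁻¹) hEt hPt (y - μE) μpr μstar μ hμstar
    linarith [htrc, hquad, hgν]
  -- value at the optimum
  have hA : Γstar⁻¹ * Γstar = 1 := by
    rw [hΓsinv]
    exact Matrix.mul_nonsing_inv _ hHd
  have hB1 : (Bᵀ * ΓE⁻¹ * B + Γpr⁻¹) * Γstar = 1 := Matrix.mul_nonsing_inv _ hHd
  have hFstar : F μstar Γstar = ((n : ℝ) + n) + (gν + Real.log Γpr.det) := by
    rw [hFval μstar Γstar hΓs, hA, hB1]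
    simp [Matrix.trace_one]
  constructor
  · intro μ S hS
    rw [hFstar, hFval μ S hS]
    have hkey : (n : ℝ) + n ≤ (S⁻¹ * Γstar).trace + ((Bᵀ * ΓE⁻¹ * B + Γpr⁻¹) * S).trace := by
      have := key_le hΓs hS
      rwa [← hΓsinv]
    have hq1 : 0 ≤ (μ - μstar) ⬝ᵥ (S⁻¹ *ᵥ (μ - μstar)) := quad_nonneg hS.inv _
    have hq2 : 0 ≤ (μ - μstar) ⬝ᵥ ((Bᵀ * ΓE⁻¹ * B + Γpr⁻¹) *ᵥ (μ - μstar)) := quad_nonneg hH _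
    linarith
  · intro μ S hS
    constructor
    · intro heq
      rw [hFstar, hFval μ S hS] at heq
      have hkey : (n : ℝ) + n ≤ (S⁻¹ * Γstar).trace + ((Bᵀ * ΓE⁻¹ * B + Γpr⁻¹) * S).trace := by
        have := key_le hΓs hS
        rwa [← hΓsinv]
      have hq1 : 0 ≤ (μ - μstar) ⬝ᵥ (S⁻¹ *ᵥ (μ - μstar)) := quad_nonneg hS.inv _
      have hq2 : 0 ≤ (μ - μstar) ⬝ᵥ ((Bᵀ * ΓE⁻¹ * B + Γpr⁻¹) *ᵥ (μ - μstar)) := quad_nonneg hH _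
      have htr0 : (S⁻¹ * Γstar).trace + ((Bᵀ * ΓE⁻¹ * B + Γpr⁻¹) * S).trace = (n : ℝ) + n := by
        linarith
      have hq10 : (μ - μstar) ⬝ᵥ (S⁻¹ *ᵥ (μ - μstar)) = 0 := by linarith
      have hSeq : S = Γstar := by
        apply (key_eq_iff hΓs hS).mp
        rwa [hΓsinv]
      have hμeq : μ = μstar := by
        have := (quad_eq_zero_iff hS.inv _).mp hq10
        have := sub_eq_zero.mp this
        exact this
      exact ⟨hμeq, hSeq⟩
    · rintro ⟨rfl, rfl⟩
      rfl
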